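/- Let q = p^α be a prime power, L a proper subset of {0,...,q-1}, and F_L(x) := Σ_{a ∈ {0,...,q-1}\L} (-1)^{q-1} C(x-a-1, q-1). Then for all integers m, t we have F_L(t + mq) ≡ F_L(t) (mod p), i.e. F_L mod p is periodic with period q on the integers. -/

import Mathlib

lemma shift_lemma (p α : ℕ) (hp : p.Prime) (hα : 1 ≤ α) (q : ℕ) (hq : q = p ^ α)
    (x : ℤ) :
    Ring.choose (x + (q : ℤ)) (q - 1) ≡ Ring.choose x (q - 1) [ZMOD p] := by
  have hq1 : 1 ≤ q := by
    subst hq; exact Nat.one_le_pow _ _ hp.pos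
  rw [Ring.add_choose_eq _ (Commute.all _ _)]
  rw [Finset.Nat.sum_antidiagonal_eq_sum_range_succ
    (fun i j => Ring.choose x i * Ring.choose (q : ℤ) j)]
  rw [Finset.sum_range_succ]
  simp only [Nat.sub_self, Ring.choose_zero_right, mul_one]
  have hzero : (∑ k ∈ Finset.range (q - 1),
      Ring.choose x k * Ring.choose (q : ℤ) (q - 1 - k)) ≡ 0 [ZMOD p] := by
    have : ((p : ℤ)) ∣ ∑ k ∈ Finset.range (q - 1),
        Ring.choose x k * Ring.choose (q : ℤ) (q - 1 - k) := by
      apply Finset.dvd_sum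
      intro k hk
      have hkq : k < q - 1 := Finset.mem_range.mp hk
      have hc : Ring.choose ((q : ℤ)) (q - 1 - k) = ((q.choose (q - 1 - k) : ℕ) : ℤ) := by
        exact_mod_cast Ring.choose_natCast (R := ℤ) q (q - 1 - k)
      rw [hc]
      apply Dvd.dvd.mul_left
      subst hq
      exact_mod_cast hp.dvd_choose_pow (n := α) (by omega) (by omega)
    exact (Int.modEq_zero_iff_dvd).mpr this
  calc (∑ k ∈ Finset.range (q - 1),
      Ring.choose x k * Ring.choose (q : ℤ) (q - 1 - k)) + Ring.choose x (q - 1)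
      ≡ 0 + Ring.choose x (q - 1) [ZMOD p] := Int.ModEq.add hzero rfl
    _ = Ring.choose x (q - 1) := by ring

lemma shift_int (p α : ℕ) (hp : p.Prime) (hα : 1 ≤ α) (q : ℕ) (hq : q = p ^ α)
    (m : ℤ) (x : ℤ) :
    Ring.choose (x + m * q) (q - 1) ≡ Ring.choose x (q - 1) [ZMOD p] := by
  induction m using Int.induction_on with
  | zero => simp
  | succ n ih =>
      have h1 := shift_lemma p α hp hα q hq (x + n * q)
      have : x + ((n : ℤ) + 1) * q = (x + n * q) + q := by ring
      rw [this]
      exact h1.trans ih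
  | pred n ih =>
      have h1 := shift_lemma p α hp hα q hq (x + (-(n : ℤ) - 1) * q)
      have h2 : (x + (-(n : ℤ) - 1) * q) + q = x + (-(n : ℤ)) * q := by ring
      rw [h2] at h1
      exact h1.symm.trans ih

/-- The concrete separating polynomial
`F_L(x) = Σ_{a ∈ {0,...,q-1} \ L} (-1)^(q-1) C(x-a-1, q-1)` is periodic mod `p`
with period `q` on the integers: `F_L(t + m q) ≡ F_L(t) (mod p)`. -/
theorem stmt6 (p α : ℕ) (hp : p.Prime) (hα : 1 ≤ α) (q : ℕ) (hq : q = p ^ α)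
    (L : Finset ℕ) (hL : L ⊂ Finset.range q) (t m : ℤ) :
    (∑ a ∈ Finset.range q \ L, (-1 : ℤ) ^ (q - 1) * Ring.choose (t + m * q - a - 1) (q - 1)) ≡
    (∑ a ∈ Finset.range q \ L, (-1 : ℤ) ^ (q - 1) * Ring.choose (t - a - 1) (q - 1))
      [ZMOD p] := by
  rw [Int.modEq_iff_dvd, ← Finset.sum_sub_distrib]
  apply Finset.dvd_sum
  intro a ha
  rw [← mul_sub]
  apply Dvd.dvd.mul_left
  have h := shift_int p α hp hα q hq m (t - a - 1)
  have he : t + m * q - a - 1 = (t - a - 1) + m * q := by ring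
  rw [he]
  exact h.dvd
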